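/- For the 5-dimensional Lie algebra L_{5,8} = ⟨x₁,…,x₅ : [x₁,x₂]=x₄, [x₁,x₃]=x₅⟩, one has L_{5,8} ∧ L_{5,8} ≅ A(8) and L_{5,8} ⊗ L_{5,8} ≅ A(14). -/

import Mathlib

open LieAlgebra Matrix Module


open LieAlgebra

section ProdLie
variable {L M : Type*}

instance prodLieRing [LieRing L] [LieRing M] : LieRing (L × M) where
  bracket x y := (⁅x.1, y.1⁆, ⁅x.2, y.2⁆)
  add_lie x y z := by ext <;> simp [add_lie]
  lie_add x y z := by ext <;> simp [lie_add]
  lie_self x := by ext <;> simp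
  leibniz_lie x y z := by ext <;> simp

@[simp] theorem prod_bracket_fst [LieRing L] [LieRing M] (x y : L × M) :
    ⁅x, y⁆.1 = ⁅x.1, y.1⁆ := rfl
@[simp] theorem prod_bracket_snd [LieRing L] [LieRing M] (x y : L × M) :
    ⁅x, y⁆.2 = ⁅x.2, y.2⁆ := rfl

instance prodLieAlgebra (F : Type*) [CommRing F] [LieRing L] [LieRing M]
    [LieAlgebra F L] [LieAlgebra F M] : LieAlgebra F (L × M) where
  lie_smul t x y := by ext <;> simp
end ProdLie

section AbL
variable (F : Type*) [Field F]

/-- The abelian Lie algebra of dimension `k` over `F`. -/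
def AbLie (k : ℕ) : Type _ := Fin k → F

instance (k : ℕ) : AddCommGroup (AbLie F k) := Pi.addCommGroup
instance (k : ℕ) : Module F (AbLie F k) := Pi.module _ _ _

instance (k : ℕ) : LieRing (AbLie F k) where
  bracket _ _ := 0
  add_lie _ _ _ := (zero_add 0).symm
  lie_add _ _ _ := (zero_add 0).symm
  lie_self _ := rfl
  leibniz_lie _ _ _ := (zero_add 0).symm

instance (k : ℕ) : LieAlgebra F (AbLie F k) where
  lie_smul t x y := (smul_zero t).symm

instance (k : ℕ) : FiniteDimensional F (AbLie F k) :=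
  (inferInstance : FiniteDimensional F (Fin k → F))

instance (k : ℕ) : IsLieAbelian (AbLie F k) := ⟨fun _ _ => rfl⟩
end AbL
open Matrix
section Heis
variable (F : Type*) [Field F]

/-- The Heisenberg Lie algebra `H(m)` of dimension `2m+1`. -/
def Heis (m : ℕ) : Type _ := (Fin m → F) × (Fin m → F) × F

instance (m : ℕ) : AddCommGroup (Heis F m) := Prod.instAddCommGroup
instance (m : ℕ) : Module F (Heis F m) := Prod.instModule

instance (m : ℕ) : LieRing (Heis F m) where
  bracket x y := (0, 0, x.1 ⬝ᵥ y.2.1 - y.1 ⬝ᵥ x.2.1)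
  add_lie x y z := by
    refine Prod.ext ?_ (Prod.ext ?_ ?_)
    · show (0 : Fin m → F) = 0 + 0; rw [add_zero]
    · show (0 : Fin m → F) = 0 + 0; rw [add_zero]
    · show (x.1 + y.1) ⬝ᵥ z.2.1 - z.1 ⬝ᵥ (x.2.1 + y.2.1) =
        (x.1 ⬝ᵥ z.2.1 - z.1 ⬝ᵥ x.2.1) + (y.1 ⬝ᵥ z.2.1 - z.1 ⬝ᵥ y.2.1)
      rw [add_dotProduct, dotProduct_add]; ring
  lie_add x y z := by
    refine Prod.ext ?_ (Prod.ext ?_ ?_)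
    · show (0 : Fin m → F) = 0 + 0; rw [add_zero]
    · show (0 : Fin m → F) = 0 + 0; rw [add_zero]
    · show x.1 ⬝ᵥ (y.2.1 + z.2.1) - (y.1 + z.1) ⬝ᵥ x.2.1 =
        (x.1 ⬝ᵥ y.2.1 - y.1 ⬝ᵥ x.2.1) + (x.1 ⬝ᵥ z.2.1 - z.1 ⬝ᵥ x.2.1)
      rw [add_dotProduct, dotProduct_add]; ring
  lie_self x := by
    refine Prod.ext rfl (Prod.ext rfl ?_)
    show x.1 ⬝ᵥ x.2.1 - x.1 ⬝ᵥ x.2.1 = 0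
    ring
  leibniz_lie x y z := by
    refine Prod.ext ?_ (Prod.ext ?_ ?_)
    · show (0 : Fin m → F) = 0 + 0; rw [add_zero]
    · show (0 : Fin m → F) = 0 + 0; rw [add_zero]
    · show x.1 ⬝ᵥ (0 : Fin m → F) - (0 : Fin m → F) ⬝ᵥ x.2.1 =
        ((0 : Fin m → F) ⬝ᵥ z.2.1 - z.1 ⬝ᵥ (0 : Fin m → F)) +
          (y.1 ⬝ᵥ (0 : Fin m → F) - (0 : Fin m → F) ⬝ᵥ y.2.1)
      simp

instance (m : ℕ) : LieAlgebra F (Heis F m) where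
  lie_smul t x y := by
    refine Prod.ext ?_ (Prod.ext ?_ ?_)
    · show (0 : Fin m → F) = t • 0; rw [smul_zero]
    · show (0 : Fin m → F) = t • 0; rw [smul_zero]
    · show x.1 ⬝ᵥ (t • y.2.1) - (t • y.1) ⬝ᵥ x.2.1 = t • (x.1 ⬝ᵥ y.2.1 - y.1 ⬝ᵥ x.2.1)
      rw [dotProduct_smul, smul_dotProduct, smul_sub]

instance (m : ℕ) : FiniteDimensional F (Heis F m) :=
  (inferInstance : FiniteDimensional F ((Fin m → F) × (Fin m → F) × F))
end Heis
open LieAlgebra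

universe u v

section Functors
variable (F : Type u) [Field F] (L : Type v) [LieRing L] [LieAlgebra F L]

/-- The canonical free presentation `FreeLieAlgebra F L → L`. -/
noncomputable def presHom : FreeLieAlgebra F L →ₗ⁅F⁆ L := FreeLieAlgebra.lift F id

/-- The relation ideal `R` of the canonical free presentation. -/
noncomputable def presKer : LieIdeal F (FreeLieAlgebra F L) := (presHom F L).ker

/-- The Schur multiplier `M(L) = (R ∩ F²)/[R,F]` of a Lie algebra. -/
noncomputable abbrev Multiplier : Type (max u v) :=
  ↥((presKer F L ⊓ derivedSeries F (FreeLieAlgebra F L) 1).toSubmodule) ⧸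
    (Submodule.comap
      ((presKer F L ⊓ derivedSeries F (FreeLieAlgebra F L) 1).toSubmodule).subtype
      (⁅presKer F L, (⊤ : LieIdeal F (FreeLieAlgebra F L))⁆ : LieIdeal F (FreeLieAlgebra F L)).toSubmodule)


/-- Relations defining the nonabelian tensor square. -/
def tensorRel : Set (FreeLieAlgebra F (L × L)) :=
  letI e : L × L → FreeLieAlgebra F (L × L) := FreeLieAlgebra.of F
  { x | (∃ (c : F) (a b : L), x = e (c • a, b) - c • e (a, b)) ∨
        (∃ (c : F) (a b : L), x = e (a, c • b) - c • e (a, b)) ∨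
        (∃ a a' b : L, x = e (a + a', b) - e (a, b) - e (a', b)) ∨
        (∃ a b b' : L, x = e (a, b + b') - e (a, b) - e (a, b')) ∨
        (∃ a a' b : L, x = e (⁅a, a'⁆, b) - e (a, ⁅a', b⁆) + e (a', ⁅a, b⁆)) ∨
        (∃ a b b' : L, x = e (a, ⁅b, b'⁆) - e (⁅b', a⁆, b) + e (⁅b, a⁆, b')) ∨
        (∃ a b a' b' : L, x = ⁅e (a, b), e (a', b')⁆ + e (⁅b, a⁆, ⁅a', b'⁆)) }

/-- The nonabelian tensor square `L ⊗ L`. -/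
abbrev NTensor : Type (max u v) :=
  FreeLieAlgebra F (L × L) ⧸ LieSubmodule.lieSpan F (FreeLieAlgebra F (L × L)) (tensorRel F L)


/-- The generator `a ⊗ b` of the nonabelian tensor square. -/
noncomputable def tmk (a b : L) : NTensor F L :=
  LieSubmodule.Quotient.mk (N := LieSubmodule.lieSpan F (FreeLieAlgebra F (L × L)) (tensorRel F L))
    (FreeLieAlgebra.of F (a, b))

/-- The square `L □ L`, i.e. the subalgebra of `L ⊗ L` generated by the elements `a ⊗ a`. -/
noncomputable def SqSub : LieSubalgebra F (NTensor F L) :=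
  LieSubalgebra.lieSpan F _ { x | ∃ a : L, x = tmk F L a a }

/-- The ideal of `L ⊗ L` generated by the elements `a ⊗ a`. -/
noncomputable def sqIdeal : LieIdeal F (NTensor F L) :=
  LieSubmodule.lieSpan F _ { x | ∃ a : L, x = tmk F L a a }

/-- The exterior square `L ∧ L`. -/
noncomputable abbrev ExtSq : Type (max u v) := NTensor F L ⧸ sqIdeal F L


/-- The generator `a ∧ b` of the exterior square. -/
noncomputable def wmk (a b : L) : ExtSq F L :=
  LieSubmodule.Quotient.mk (N := sqIdeal F L) (tmk F L a b)

/-- The exterior center `Z^∧(L)`. -/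
noncomputable def extCenter : Set L := { x : L | ∀ l : L, wmk F L x l = 0 }

/-- A Lie algebra is capable if it is isomorphic to `H/Z(H)` for some Lie algebra `H`. -/
def Capable : Prop :=
  ∃ (H : Type (max u v)) (_ : LieRing H) (_ : LieAlgebra F H),
    Nonempty ((H ⧸ LieAlgebra.center F H) ≃ₗ⁅F⁆ L)

/-- The corank `t(L)` of an `n`-dimensional nilpotent Lie algebra. -/
noncomputable def corank : ℕ :=
  Module.finrank F L * (Module.finrank F L - 1) / 2 - Module.finrank F (Multiplier F L)

/-- The abelianization of `L` (as an `F`-module). -/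
noncomputable abbrev AbQuot : Type v := L ⧸ derivedSeries F L 1

end Functors
section L58
variable (F : Type u) [Field F]

/-- The 5-dimensional class-two nilpotent Lie algebra `L_{5,8}` with
`[x₁,x₂] = x₄`, `[x₁,x₃] = x₅`. -/
def L58 : Type u := Fin 5 → F

instance : AddCommGroup (L58 F) := Pi.addCommGroup
instance : Module F (L58 F) := Pi.module _ _ _

instance : LieRing (L58 F) where
  bracket x y := ![0, 0, 0, x 0 * y 1 - y 0 * x 1, x 0 * y 2 - y 0 * x 2]
  add_lie x y z := by
    funext i
    show (![0, 0, 0, (x 0 + y 0) * z 1 - z 0 * (x 1 + y 1),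
            (x 0 + y 0) * z 2 - z 0 * (x 2 + y 2)] : Fin 5 → F) i =
      ![0, 0, 0, x 0 * z 1 - z 0 * x 1, x 0 * z 2 - z 0 * x 2] i +
      ![0, 0, 0, y 0 * z 1 - z 0 * y 1, y 0 * z 2 - z 0 * y 2] i
    fin_cases i <;> simp <;> ring
  lie_add x y z := by
    funext i
    show (![0, 0, 0, x 0 * (y 1 + z 1) - (y 0 + z 0) * x 1,
            x 0 * (y 2 + z 2) - (y 0 + z 0) * x 2] : Fin 5 → F) i =
      ![0, 0, 0, x 0 * y 1 - y 0 * x 1, x 0 * y 2 - y 0 * x 2] i +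
      ![0, 0, 0, x 0 * z 1 - z 0 * x 1, x 0 * z 2 - z 0 * x 2] i
    fin_cases i <;> simp <;> ring
  lie_self x := by
    funext i
    show (![0, 0, 0, x 0 * x 1 - x 0 * x 1, x 0 * x 2 - x 0 * x 2] : Fin 5 → F) i = 0
    fin_cases i <;> simp
  leibniz_lie x y z := by
    funext i
    set b : (Fin 5 → F) → (Fin 5 → F) → Fin 5 → F :=
      fun u v => ![0, 0, 0, u 0 * v 1 - v 0 * u 1, u 0 * v 2 - v 0 * u 2] with hb
    show b x (b y z) i = b (b x y) z i + b y (b x z) i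
    fin_cases i <;> simp [hb] <;> ring

instance : LieAlgebra F (L58 F) where
  lie_smul t x y := by
    funext i
    show (![0, 0, 0, x 0 * (t * y 1) - (t * y 0) * x 1,
            x 0 * (t * y 2) - (t * y 0) * x 2] : Fin 5 → F) i =
      (t • (![0, 0, 0, x 0 * y 1 - y 0 * x 1, x 0 * y 2 - y 0 * x 2] : Fin 5 → F)) i
    fin_cases i <;> simp <;> ring

instance : FiniteDimensional F (L58 F) := inferInstanceAs (FiniteDimensional F (Fin 5 → F))
end L58
section TensorLemmas
variable (F : Type u) [Field F] (L : Type v) [LieRing L] [LieAlgebra F L]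

/-- The quotient map onto the nonabelian tensor square, as a Lie algebra hom. -/
noncomputable def mkT : FreeLieAlgebra F (L × L) →ₗ⁅F⁆ NTensor F L :=
  { (LieSubmodule.lieSpan F (FreeLieAlgebra F (L × L)) (tensorRel F L)).toSubmodule.mkQ with
    map_lie' := fun {x y} => LieSubmodule.Quotient.mk_bracket _ x y }

theorem mkT_of (a b : L) : mkT F L (FreeLieAlgebra.of F (a, b)) = tmk F L a b := rfl

theorem mkT_rel {x : FreeLieAlgebra F (L × L)} (h : x ∈ tensorRel F L) :
    mkT F L x = 0 := by
  have : x ∈ LieSubmodule.lieSpan F (FreeLieAlgebra F (L × L)) (tensorRel F L) :=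
    LieSubmodule.subset_lieSpan h
  exact (LieSubmodule.Quotient.mk_eq_zero' ).mpr this

variable {F L}

theorem tmk_smul_left (c : F) (a b : L) : tmk F L (c • a) b = c • tmk F L a b := by
  have h := mkT_rel F L (x := FreeLieAlgebra.of F ((c • a : L), b) - c • FreeLieAlgebra.of F (a, b))
    (Or.inl ⟨c, a, b, rfl⟩)
  rw [map_sub, map_smul, mkT_of, mkT_of, sub_eq_zero] at h
  exact h

theorem tmk_smul_right (c : F) (a b : L) : tmk F L a (c • b) = c • tmk F L a b := by
  have h := mkT_rel F L (x := FreeLieAlgebra.of F (a, (c • b : L)) - c • FreeLieAlgebra.of F (a, b))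
    (Or.inr (Or.inl ⟨c, a, b, rfl⟩))
  rw [map_sub, map_smul, mkT_of, mkT_of, sub_eq_zero] at h
  exact h

theorem tmk_add_left (a a' b : L) : tmk F L (a + a') b = tmk F L a b + tmk F L a' b := by
  have h := mkT_rel F L (x := FreeLieAlgebra.of F ((a + a' : L), b) - FreeLieAlgebra.of F (a, b)
      - FreeLieAlgebra.of F (a', b)) (Or.inr (Or.inr (Or.inl ⟨a, a', b, rfl⟩)))
  rw [map_sub, map_sub, mkT_of, mkT_of, mkT_of, sub_sub, sub_eq_zero] at h
  exact h

theorem tmk_add_right (a b b' : L) : tmk F L a (b + b') = tmk F L a b + tmk F L a b' := by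
  have h := mkT_rel F L (x := FreeLieAlgebra.of F (a, b + b') - FreeLieAlgebra.of F (a, b)
      - FreeLieAlgebra.of F (a, b')) (Or.inr (Or.inr (Or.inr (Or.inl ⟨a, b, b', rfl⟩))))
  rw [map_sub, map_sub, mkT_of, mkT_of, mkT_of, sub_sub, sub_eq_zero] at h
  exact h

theorem tmk_lie_left (a a' b : L) :
    tmk F L ⁅a, a'⁆ b = tmk F L a ⁅a', b⁆ - tmk F L a' ⁅a, b⁆ := by
  have h := mkT_rel F L (x := FreeLieAlgebra.of F ((⁅a, a'⁆ : L), b)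
      - FreeLieAlgebra.of F (a, ⁅a', b⁆) + FreeLieAlgebra.of F (a', ⁅a, b⁆))
    (Or.inr (Or.inr (Or.inr (Or.inr (Or.inl ⟨a, a', b, rfl⟩)))))
  rw [map_add, map_sub, mkT_of, mkT_of, mkT_of] at h
  linear_combination (norm := module) h

theorem tmk_lie_right (a b b' : L) :
    tmk F L a ⁅b, b'⁆ = tmk F L ⁅b', a⁆ b - tmk F L ⁅b, a⁆ b' := by
  have h := mkT_rel F L (x := FreeLieAlgebra.of F (a, (⁅b, b'⁆ : L))
      - FreeLieAlgebra.of F (⁅b', a⁆, b) + FreeLieAlgebra.of F (⁅b, a⁆, b'))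
    (Or.inr (Or.inr (Or.inr (Or.inr (Or.inr (Or.inl ⟨a, b, b', rfl⟩))))))
  rw [map_add, map_sub, mkT_of, mkT_of, mkT_of] at h
  linear_combination (norm := module) h

theorem lie_tmk (a b a' b' : L) :
    ⁅tmk F L a b, tmk F L a' b'⁆ = - tmk F L ⁅b, a⁆ ⁅a', b'⁆ := by
  have h := mkT_rel F L (x := ⁅FreeLieAlgebra.of F (a, b), FreeLieAlgebra.of F (a', b')⁆
      + FreeLieAlgebra.of F ((⁅b, a⁆ : L), ⁅a', b'⁆))
    (Or.inr (Or.inr (Or.inr (Or.inr (Or.inr (Or.inr ⟨a, b, a', b', rfl⟩))))))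
  rw [map_add, LieHom.map_lie, mkT_of, mkT_of, mkT_of] at h
  linear_combination (norm := module) h

theorem tmk_zero_left (b : L) : tmk F L 0 b = 0 := by
  have := tmk_smul_left (0 : F) 0 b; simpa using this

theorem tmk_zero_right (a : L) : tmk F L a 0 = 0 := by
  have := tmk_smul_right (0 : F) a 0; simpa using this

theorem tmk_neg_left (a b : L) : tmk F L (-a) b = - tmk F L a b := by
  have := tmk_smul_left (-1 : F) a b; simpa using this

theorem tmk_neg_right (a b : L) : tmk F L a (-b) = - tmk F L a b := by
  have := tmk_smul_right (-1 : F) a b; simpa using this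

variable (F L)

/-- The tensor square is spanned, as a module, by the pure tensors. -/
theorem tmk_span :
    Submodule.span F (Set.range fun p : L × L => tmk F L p.1 p.2) = ⊤ := by
  set P := Submodule.span F (Set.range fun p : L × L => tmk F L p.1 p.2) with hP
  have hmem : ∀ a b : L, tmk F L a b ∈ P := fun a b => Submodule.subset_span ⟨(a, b), rfl⟩
  have step1 : ∀ (a b : L), ∀ y ∈ P, ⁅tmk F L a b, y⁆ ∈ P := by
    intro a b y hy
    have hle : P ≤ P.comap (LieAlgebra.ad F (NTensor F L) (tmk F L a b)) := by
      rw [hP, Submodule.span_le]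
      rintro v ⟨⟨a', b'⟩, rfl⟩
      simp only [SetLike.mem_coe, Submodule.mem_comap, LieAlgebra.ad_apply]
      rw [lie_tmk]
      exact P.neg_mem (hmem _ _)
    have h := hle hy
    rwa [Submodule.mem_comap, LieAlgebra.ad_apply] at h
  have step2 : ∀ x ∈ P, ∀ y ∈ P, ⁅x, y⁆ ∈ P := by
    intro x hx y hy
    have hle : P ≤ P.comap (-(LieAlgebra.ad F (NTensor F L) y : Module.End F (NTensor F L))) := by
      rw [hP, Submodule.span_le]
      rintro v ⟨⟨a', b'⟩, rfl⟩
      simp only [SetLike.mem_coe, Submodule.mem_comap, LinearMap.neg_apply, LieAlgebra.ad_apply]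
      rw [lie_skew]
      exact step1 a' b' y hy
    have h := hle hx
    rw [Submodule.mem_comap, LinearMap.neg_apply, LieAlgebra.ad_apply] at h
    rwa [lie_skew] at h
  let S : LieSubalgebra F (NTensor F L) :=
    { P with lie_mem' := fun {x y} hx hy => step2 x hx y hy }
  let j : FreeLieAlgebra F (L × L) →ₗ⁅F⁆ S :=
    FreeLieAlgebra.lift F (fun p => (⟨tmk F L p.1 p.2, hmem p.1 p.2⟩ : S))
  have hcomp : S.incl.comp j = mkT F L := by
    apply FreeLieAlgebra.hom_ext
    intro p
    show (j (FreeLieAlgebra.of F p) : NTensor F L) = mkT F L (FreeLieAlgebra.of F p)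
    rw [FreeLieAlgebra.lift_of_apply, mkT_of]
  rw [eq_top_iff]
  rintro z -
  obtain ⟨w, rfl⟩ := Submodule.mkQ_surjective _ z
  have : mkT F L w = (S.incl.comp j) w := by rw [hcomp]
  show ((LieSubmodule.lieSpan F (FreeLieAlgebra F (L × L)) (tensorRel F L)).toSubmodule.mkQ w) ∈ P
  have h2 : (LieSubmodule.lieSpan F (FreeLieAlgebra F (L × L)) (tensorRel F L)).toSubmodule.mkQ w = mkT F L w := rfl
  rw [h2, this]
  exact (j w).2

end TensorLemmas
section L58T
variable (F : Type u) [Field F]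

/-- Standard basis of `L58`. -/
def xv (i : Fin 5) : L58 F := fun j => if j = i then 1 else 0

theorem L58_bracket (a b : L58 F) :
    ⁅a, b⁆ = ![0, 0, 0, a 0 * b 1 - b 0 * a 1, a 0 * b 2 - b 0 * a 2] := rfl

theorem L58_add_apply (a b : L58 F) (j : Fin 5) : (a + b) j = a j + b j := rfl
theorem L58_smul_apply (c : F) (a : L58 F) (j : Fin 5) : (c • a) j = c * a j := rfl
theorem L58_neg_apply (a : L58 F) (j : Fin 5) : (-a) j = -(a j) := rfl
theorem L58_zero_apply (j : Fin 5) : (0 : L58 F) j = 0 := rfl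
theorem xv_apply (i j : Fin 5) : xv F i j = if j = i then 1 else 0 := rfl

theorem xv_decomp (a : L58 F) :
    a = a 0 • xv F 0 + a 1 • xv F 1 + a 2 • xv F 2 + a 3 • xv F 3 + a 4 • xv F 4 := by
  funext j
  simp only [L58_add_apply, L58_smul_apply, xv_apply]
  fin_cases j <;> simp

theorem lie_xv01 : ⁅xv F 0, xv F 1⁆ = xv F 3 := by
  funext j
  rw [L58_bracket]
  fin_cases j <;> simp [xv_apply]

theorem lie_xv02 : ⁅xv F 0, xv F 2⁆ = xv F 4 := by
  funext j
  rw [L58_bracket]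
  fin_cases j <;> simp [xv_apply]

theorem lie_xv10 : ⁅xv F 1, xv F 0⁆ = -xv F 3 := by
  funext j
  rw [L58_bracket]
  simp only [L58_neg_apply]
  fin_cases j <;> simp [xv_apply]

theorem lie_xv20 : ⁅xv F 2, xv F 0⁆ = -xv F 4 := by
  funext j
  rw [L58_bracket]
  simp only [L58_neg_apply]
  fin_cases j <;> simp [xv_apply]

theorem lie_xv_zero (i j : Fin 5)
    (h : ¬((i = 0 ∧ (j = 1 ∨ j = 2)) ∨ (j = 0 ∧ (i = 1 ∨ i = 2)))) :
    ⁅xv F i, xv F j⁆ = 0 := by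
  funext m
  rw [L58_bracket]
  simp only [L58_zero_apply]
  fin_cases i <;> fin_cases j <;> simp_all <;> fin_cases m <;> simp [xv_apply]

end L58T
section Phi
variable (F : Type u) [Field F]

/-- Coordinates of the tensor square of `L58`. -/
def phiT (a b : L58 F) : AbLie F 14 := fun j =>
  match j.val with
  | 0 => a 0 * b 0
  | 1 => a 0 * b 1
  | 2 => a 0 * b 2
  | 3 => a 1 * b 0
  | 4 => a 1 * b 1
  | 5 => a 1 * b 2
  | 6 => a 2 * b 0
  | 7 => a 2 * b 1
  | 8 => a 2 * b 2
  | 9 => a 0 * b 3 - a 3 * b 0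
  | 10 => a 0 * b 4 - a 4 * b 0
  | 11 => a 1 * b 3 - a 3 * b 1
  | 12 => a 2 * b 4 - a 4 * b 2
  | _ => a 1 * b 4 + a 2 * b 3 - a 3 * b 2 - a 4 * b 1

theorem AbLie_add_apply {k : ℕ} (v w : AbLie F k) (j : Fin k) : (v + w) j = v j + w j := rfl
theorem AbLie_sub_apply {k : ℕ} (v w : AbLie F k) (j : Fin k) : (v - w) j = v j - w j := rfl
theorem AbLie_smul_apply {k : ℕ} (c : F) (v : AbLie F k) (j : Fin k) : (c • v) j = c * v j := rfl
theorem AbLie_zero_apply {k : ℕ} (j : Fin k) : (0 : AbLie F k) j = 0 := rfl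

theorem phiT_smul_left (c : F) (a b : L58 F) : phiT F (c • a) b = c • phiT F a b := by
  funext j
  simp only [AbLie_smul_apply]
  fin_cases j <;> simp [phiT, L58_smul_apply] <;> ring

theorem phiT_smul_right (c : F) (a b : L58 F) : phiT F a (c • b) = c • phiT F a b := by
  funext j
  simp only [AbLie_smul_apply]
  fin_cases j <;> simp [phiT, L58_smul_apply] <;> ring

theorem phiT_add_left (a a' b : L58 F) : phiT F (a + a') b = phiT F a b + phiT F a' b := by
  funext j
  simp only [AbLie_add_apply]
  fin_cases j <;> simp [phiT, L58_add_apply] <;> ring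

theorem phiT_add_right (a b b' : L58 F) : phiT F a (b + b') = phiT F a b + phiT F a b' := by
  funext j
  simp only [AbLie_add_apply]
  fin_cases j <;> simp [phiT, L58_add_apply] <;> ring

theorem phiT_lie_left (a a' b : L58 F) :
    phiT F ⁅a, a'⁆ b = phiT F a ⁅a', b⁆ - phiT F a' ⁅a, b⁆ := by
  funext j
  simp only [AbLie_sub_apply, L58_bracket]
  fin_cases j <;> simp [phiT] <;> ring

theorem phiT_lie_right (a b b' : L58 F) :
    phiT F a ⁅b, b'⁆ = phiT F ⁅b', a⁆ b - phiT F ⁅b, a⁆ b' := by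
  funext j
  simp only [AbLie_sub_apply, L58_bracket]
  fin_cases j <;> simp [phiT] <;> ring

theorem phiT_lie_lie (a b a' b' : L58 F) : phiT F ⁅b, a⁆ ⁅a', b'⁆ = 0 := by
  funext j
  simp only [AbLie_zero_apply, L58_bracket]
  fin_cases j <;> simp [phiT] <;> ring

end Phi
section FT
variable (F : Type u) [Field F]

/-- The canonical hom from the free Lie algebra to `A(14)`. -/
noncomputable def fT : FreeLieAlgebra F (L58 F × L58 F) →ₗ⁅F⁆ AbLie F 14 :=
  FreeLieAlgebra.lift F fun p => phiT F p.1 p.2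

theorem fT_of (a b : L58 F) : fT F (FreeLieAlgebra.of F (a, b)) = phiT F a b := by
  simp [fT, FreeLieAlgebra.lift_of_apply]

theorem fT_rel : tensorRel F (L58 F) ⊆ {x | x ∈ (fT F).ker} := by
  intro x hx
  simp only [tensorRel, Set.mem_setOf_eq] at hx
  simp only [Set.mem_setOf_eq, LieHom.mem_ker]
  rcases hx with ⟨c,a,b,rfl⟩|⟨c,a,b,rfl⟩|⟨a,a',b,rfl⟩|⟨a,b,b',rfl⟩|⟨a,a',b,rfl⟩|⟨a,b,b',rfl⟩|⟨a,b,a',b',rfl⟩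
  · rw [map_sub, map_smul, fT_of, fT_of, phiT_smul_left, sub_self]
  · rw [map_sub, map_smul, fT_of, fT_of, phiT_smul_right, sub_self]
  · rw [map_sub, map_sub, fT_of, fT_of, fT_of, phiT_add_left]
    abel
  · rw [map_sub, map_sub, fT_of, fT_of, fT_of, phiT_add_right]
    abel
  · rw [map_add, map_sub, fT_of, fT_of, fT_of, phiT_lie_left]
    abel
  · rw [map_add, map_sub, fT_of, fT_of, fT_of, phiT_lie_right]
    abel
  · rw [map_add, LieHom.map_lie, fT_of, fT_of, fT_of, phiT_lie_lie,
      trivial_lie_zero, zero_add]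

theorem fT_span_le :
    LieSubmodule.lieSpan F (FreeLieAlgebra F (L58 F × L58 F)) (tensorRel F (L58 F)) ≤
      (fT F).ker :=
  LieSubmodule.lieSpan_le.mpr (fT_rel F)

/-- The induced hom `NTensor(L58) → A(14)`. -/
noncomputable def fbar : NTensor F (L58 F) →ₗ⁅F⁆ AbLie F 14 :=
  { Submodule.liftQ
      (LieSubmodule.lieSpan F (FreeLieAlgebra F (L58 F × L58 F))
        (tensorRel F (L58 F))).toSubmodule
      (fT F).toLinearMap
      (fun x hx => LieHom.mem_ker.mp (fT_span_le F hx)) with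
    map_lie' := by
      rintro ⟨x⟩ ⟨y⟩
      show fT F ⁅x, y⁆ = ⁅fT F x, fT F y⁆
      rw [LieHom.map_lie] }

theorem fbar_tmk (a b : L58 F) : fbar F (tmk F (L58 F) a b) = phiT F a b :=
  fT_of F a b

/-- The candidate inverse `A(14) → NTensor(L58)`. -/
noncomputable def psiT : AbLie F 14 →ₗ[F] NTensor F (L58 F) where
  toFun v :=
    v 0 • tmk F (L58 F) (xv F 0) (xv F 0) + v 1 • tmk F (L58 F) (xv F 0) (xv F 1) +
    v 2 • tmk F (L58 F) (xv F 0) (xv F 2) + v 3 • tmk F (L58 F) (xv F 1) (xv F 0) +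
    v 4 • tmk F (L58 F) (xv F 1) (xv F 1) + v 5 • tmk F (L58 F) (xv F 1) (xv F 2) +
    v 6 • tmk F (L58 F) (xv F 2) (xv F 0) + v 7 • tmk F (L58 F) (xv F 2) (xv F 1) +
    v 8 • tmk F (L58 F) (xv F 2) (xv F 2) + v 9 • tmk F (L58 F) (xv F 0) (xv F 3) +
    v 10 • tmk F (L58 F) (xv F 0) (xv F 4) + v 11 • tmk F (L58 F) (xv F 1) (xv F 3) +
    v 12 • tmk F (L58 F) (xv F 2) (xv F 4) + v 13 • tmk F (L58 F) (xv F 1) (xv F 4)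
  map_add' v w := by
    simp only [AbLie_add_apply]
    module
  map_smul' c v := by
    simp only [AbLie_smul_apply, RingHom.id_apply]
    module

theorem psiT_apply (v : AbLie F 14) :
    psiT F v =
    v 0 • tmk F (L58 F) (xv F 0) (xv F 0) + v 1 • tmk F (L58 F) (xv F 0) (xv F 1) +
    v 2 • tmk F (L58 F) (xv F 0) (xv F 2) + v 3 • tmk F (L58 F) (xv F 1) (xv F 0) +
    v 4 • tmk F (L58 F) (xv F 1) (xv F 1) + v 5 • tmk F (L58 F) (xv F 1) (xv F 2) +
    v 6 • tmk F (L58 F) (xv F 2) (xv F 0) + v 7 • tmk F (L58 F) (xv F 2) (xv F 1) +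
    v 8 • tmk F (L58 F) (xv F 2) (xv F 2) + v 9 • tmk F (L58 F) (xv F 0) (xv F 3) +
    v 10 • tmk F (L58 F) (xv F 0) (xv F 4) + v 11 • tmk F (L58 F) (xv F 1) (xv F 3) +
    v 12 • tmk F (L58 F) (xv F 2) (xv F 4) + v 13 • tmk F (L58 F) (xv F 1) (xv F 4) := rfl

end FT
section Table
variable (F : Type u) [Field F]

theorem t3b (b : L58 F) : tmk F (L58 F) (xv F 3) b =
    tmk F (L58 F) (xv F 0) ⁅xv F 1, b⁆ - tmk F (L58 F) (xv F 1) ⁅xv F 0, b⁆ := by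
  have h := tmk_lie_left (F := F) (L := L58 F) (xv F 0) (xv F 1) b
  rwa [lie_xv01] at h

theorem t4b (b : L58 F) : tmk F (L58 F) (xv F 4) b =
    tmk F (L58 F) (xv F 0) ⁅xv F 2, b⁆ - tmk F (L58 F) (xv F 2) ⁅xv F 0, b⁆ := by
  have h := tmk_lie_left (F := F) (L := L58 F) (xv F 0) (xv F 2) b
  rwa [lie_xv02] at h

theorem t30 : tmk F (L58 F) (xv F 3) (xv F 0) = -tmk F (L58 F) (xv F 0) (xv F 3) := by
  rw [t3b, lie_xv10, lie_xv_zero F 0 0 (by decide), tmk_neg_right, tmk_zero_right, sub_zero]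

theorem t31 : tmk F (L58 F) (xv F 3) (xv F 1) = -tmk F (L58 F) (xv F 1) (xv F 3) := by
  rw [t3b, lie_xv_zero F 1 1 (by decide), lie_xv01, tmk_zero_right, zero_sub]

theorem t32 : tmk F (L58 F) (xv F 3) (xv F 2) = -tmk F (L58 F) (xv F 1) (xv F 4) := by
  rw [t3b, lie_xv_zero F 1 2 (by decide), lie_xv02, tmk_zero_right, zero_sub]

theorem t33 : tmk F (L58 F) (xv F 3) (xv F 3) = 0 := by
  rw [t3b, lie_xv_zero F 1 3 (by decide), lie_xv_zero F 0 3 (by decide),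
    tmk_zero_right, tmk_zero_right, sub_zero]

theorem t34 : tmk F (L58 F) (xv F 3) (xv F 4) = 0 := by
  rw [t3b, lie_xv_zero F 1 4 (by decide), lie_xv_zero F 0 4 (by decide),
    tmk_zero_right, tmk_zero_right, sub_zero]

theorem t40 : tmk F (L58 F) (xv F 4) (xv F 0) = -tmk F (L58 F) (xv F 0) (xv F 4) := by
  rw [t4b, lie_xv20, lie_xv_zero F 0 0 (by decide), tmk_neg_right, tmk_zero_right, sub_zero]

theorem t23 : tmk F (L58 F) (xv F 2) (xv F 3) = tmk F (L58 F) (xv F 1) (xv F 4) := by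
  have h := tmk_lie_left (F := F) (L := L58 F) (xv F 1) (xv F 2) (xv F 0)
  rw [lie_xv_zero F 1 2 (by decide), lie_xv20, lie_xv10, tmk_zero_left,
    tmk_neg_right, tmk_neg_right] at h
  linear_combination (norm := module) -h

theorem t41 : tmk F (L58 F) (xv F 4) (xv F 1) = -tmk F (L58 F) (xv F 1) (xv F 4) := by
  rw [t4b, lie_xv_zero F 2 1 (by decide), lie_xv01, tmk_zero_right, zero_sub, t23]

theorem t42 : tmk F (L58 F) (xv F 4) (xv F 2) = -tmk F (L58 F) (xv F 2) (xv F 4) := by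
  rw [t4b, lie_xv_zero F 2 2 (by decide), lie_xv02, tmk_zero_right, zero_sub]

theorem t43 : tmk F (L58 F) (xv F 4) (xv F 3) = 0 := by
  rw [t4b, lie_xv_zero F 2 3 (by decide), lie_xv_zero F 0 3 (by decide),
    tmk_zero_right, tmk_zero_right, sub_zero]

theorem t44 : tmk F (L58 F) (xv F 4) (xv F 4) = 0 := by
  rw [t4b, lie_xv_zero F 2 4 (by decide), lie_xv_zero F 0 4 (by decide),
    tmk_zero_right, tmk_zero_right, sub_zero]

theorem tmk_expand (a b : L58 F) : tmk F (L58 F) a b = psiT F (phiT F a b) := by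
  rw [psiT_apply]
  have hd := xv_decomp F
  conv_lhs => rw [hd a, hd b]
  simp only [tmk_add_left, tmk_add_right, tmk_smul_left, tmk_smul_right,
    t30, t31, t32, t33, t34, t40, t41, t42, t43, t44, t23]
  simp only [phiT, Fin.isValue, Fin.coe_ofNat_eq_mod, Nat.reduceMod]
  module

end Table
section TIso
variable (F : Type u) [Field F]

theorem fbar_psiT (v : AbLie F 14) : fbar F (psiT F v) = v := by
  rw [psiT_apply]
  simp only [map_add, map_smul, fbar_tmk]
  funext j
  simp only [AbLie_add_apply, AbLie_smul_apply]
  fin_cases j <;> simp [phiT, xv_apply] <;> ring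

theorem psiT_fbar (z : NTensor F (L58 F)) : psiT F (fbar F z) = z := by
  have hz : z ∈ Submodule.span F
      (Set.range fun p : L58 F × L58 F => tmk F (L58 F) p.1 p.2) := by
    rw [tmk_span]; trivial
  induction hz using Submodule.span_induction with
  | mem u hu =>
    obtain ⟨⟨a, b⟩, rfl⟩ := hu
    rw [fbar_tmk, ← tmk_expand]
  | zero => simp
  | add u w hu' hw' hu hw => rw [map_add, map_add, hu, hw]
  | smul c u hu' hu => rw [map_smul, LinearMap.map_smul, hu]

/-- `L58 ⊗ L58 ≅ A(14)`. -/
noncomputable def tensorEquiv : NTensor F (L58 F) ≃ₗ⁅F⁆ AbLie F 14 :=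
  LieEquiv.ofBijective (fbar F)
    ⟨fun z w h => by
      have hz := psiT_fbar F z
      rw [h, psiT_fbar F w] at hz
      exact hz.symm,
     fun v => ⟨psiT F v, fbar_psiT F v⟩⟩

end TIso
section EIso
variable (F : Type u) [Field F]

/-- The quotient map onto the exterior square, as a Lie algebra hom. -/
noncomputable def mkE : NTensor F (L58 F) →ₗ⁅F⁆ ExtSq F (L58 F) :=
  { (sqIdeal F (L58 F)).toSubmodule.mkQ with
    map_lie' := fun {x y} => LieSubmodule.Quotient.mk_bracket _ x y }

theorem wmk_eq (a b : L58 F) :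
    wmk F (L58 F) a b = mkE F (tmk F (L58 F) a b) := rfl

/-- Coordinates of the exterior square. -/
def h8f (v : AbLie F 14) : AbLie F 8 := fun j =>
  match j.val with
  | 0 => v 1 - v 3
  | 1 => v 2 - v 6
  | 2 => v 5 - v 7
  | 3 => v 9
  | 4 => v 10
  | 5 => v 11
  | 6 => v 12
  | _ => v 13

/-- The projection `A(14) → A(8)`. -/
def h8 : AbLie F 14 →ₗ[F] AbLie F 8 where
  toFun := h8f F
  map_add' v w := by
    funext j
    simp only [AbLie_add_apply]
    fin_cases j <;> simp [h8f, AbLie_add_apply] <;> ring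
  map_smul' c v := by
    funext j
    simp only [AbLie_smul_apply, RingHom.id_apply]
    fin_cases j <;> simp [h8f, AbLie_smul_apply] <;> ring

theorem h8_apply (v : AbLie F 14) : h8 F v = h8f F v := rfl

/-- The composite hom `NTensor(L58) → A(8)`. -/
noncomputable def hf8 : NTensor F (L58 F) →ₗ⁅F⁆ AbLie F 8 :=
  { (h8 F).comp (fbar F).toLinearMap with
    map_lie' := by
      intro x y
      show h8 F (fbar F ⁅x, y⁆) = ⁅h8 F (fbar F x), h8 F (fbar F y)⁆
      rw [LieHom.map_lie, trivial_lie_zero, map_zero, trivial_lie_zero] }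

theorem hf8_tmk (a b : L58 F) : hf8 F (tmk F (L58 F) a b) = h8 F (phiT F a b) := by
  show h8 F (fbar F (tmk F (L58 F) a b)) = h8 F (phiT F a b)
  rw [fbar_tmk]

theorem sqIdeal_le_ker : sqIdeal F (L58 F) ≤ (hf8 F).ker := by
  apply LieSubmodule.lieSpan_le.mpr
  rintro x ⟨a, rfl⟩
  simp only [SetLike.mem_coe, LieHom.mem_ker]
  rw [hf8_tmk]
  funext j
  fin_cases j <;> simp [h8f, h8_apply, phiT, AbLie_zero_apply] <;> ring

/-- The induced hom `ExtSq(L58) → A(8)`. -/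
noncomputable def ebar : ExtSq F (L58 F) →ₗ⁅F⁆ AbLie F 8 :=
  { Submodule.liftQ (sqIdeal F (L58 F)).toSubmodule (hf8 F).toLinearMap
      (fun x hx => LieHom.mem_ker.mp (sqIdeal_le_ker F hx)) with
    map_lie' := by
      rintro ⟨x⟩ ⟨y⟩
      show hf8 F ⁅x, y⁆ = ⁅hf8 F x, hf8 F y⁆
      rw [LieHom.map_lie] }

theorem ebar_wmk (a b : L58 F) : ebar F (wmk F (L58 F) a b) = h8 F (phiT F a b) :=
  hf8_tmk F a b

theorem wmk_diag (a : L58 F) : wmk F (L58 F) a a = 0 :=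
  (LieSubmodule.Quotient.mk_eq_zero').mpr (LieSubmodule.subset_lieSpan ⟨a, rfl⟩)

theorem wmk_skew (a b : L58 F) : wmk F (L58 F) b a = -wmk F (L58 F) a b := by
  have h : mkE F (tmk F (L58 F) (a + b) (a + b)) = 0 := wmk_diag F (a + b)
  rw [tmk_add_left, tmk_add_right, tmk_add_right, map_add, map_add,
    map_add, ← wmk_eq, ← wmk_eq, ← wmk_eq, ← wmk_eq, wmk_diag, wmk_diag] at h
  linear_combination (norm := module) h

/-- The candidate inverse `A(8) → ExtSq(L58)`. -/
noncomputable def psiE : AbLie F 8 →ₗ[F] ExtSq F (L58 F) where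
  toFun v :=
    v 0 • wmk F (L58 F) (xv F 0) (xv F 1) + v 1 • wmk F (L58 F) (xv F 0) (xv F 2) +
    v 2 • wmk F (L58 F) (xv F 1) (xv F 2) + v 3 • wmk F (L58 F) (xv F 0) (xv F 3) +
    v 4 • wmk F (L58 F) (xv F 0) (xv F 4) + v 5 • wmk F (L58 F) (xv F 1) (xv F 3) +
    v 6 • wmk F (L58 F) (xv F 2) (xv F 4) + v 7 • wmk F (L58 F) (xv F 1) (xv F 4)
  map_add' v w := by
    simp only [AbLie_add_apply]
    module
  map_smul' c v := by
    simp only [AbLie_smul_apply, RingHom.id_apply]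
    module

theorem psiE_apply (v : AbLie F 8) :
    psiE F v =
    v 0 • wmk F (L58 F) (xv F 0) (xv F 1) + v 1 • wmk F (L58 F) (xv F 0) (xv F 2) +
    v 2 • wmk F (L58 F) (xv F 1) (xv F 2) + v 3 • wmk F (L58 F) (xv F 0) (xv F 3) +
    v 4 • wmk F (L58 F) (xv F 0) (xv F 4) + v 5 • wmk F (L58 F) (xv F 1) (xv F 3) +
    v 6 • wmk F (L58 F) (xv F 2) (xv F 4) + v 7 • wmk F (L58 F) (xv F 1) (xv F 4) := rfl

theorem wmk_expand (a b : L58 F) :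
    wmk F (L58 F) a b = psiE F (h8 F (phiT F a b)) := by
  rw [psiE_apply, wmk_eq, tmk_expand, psiT_apply]
  simp only [map_add, map_smul, ← wmk_eq]
  have s10 := wmk_skew F (xv F 0) (xv F 1)
  have s20 := wmk_skew F (xv F 0) (xv F 2)
  have s21 := wmk_skew F (xv F 1) (xv F 2)
  rw [wmk_diag, wmk_diag, wmk_diag, s10, s20, s21]
  show _ = h8f F (phiT F a b) 0 • _ + h8f F (phiT F a b) 1 • _ + h8f F (phiT F a b) 2 • _ +
    h8f F (phiT F a b) 3 • _ + h8f F (phiT F a b) 4 • _ + h8f F (phiT F a b) 5 • _ +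
    h8f F (phiT F a b) 6 • _ + h8f F (phiT F a b) 7 • _
  simp only [h8f, phiT, Fin.isValue, Fin.coe_ofNat_eq_mod, Nat.reduceMod]
  module

theorem wmk_span :
    Submodule.span F (Set.range fun p : L58 F × L58 F => wmk F (L58 F) p.1 p.2) = ⊤ := by
  have h := tmk_span F (L58 F)
  have htop : Submodule.map (mkE F).toLinearMap ⊤ = (⊤ : Submodule F (ExtSq F (L58 F))) := by
    rw [Submodule.map_top, LinearMap.range_eq_top]
    exact Submodule.mkQ_surjective _
  rw [← htop, ← h, Submodule.map_span]
  congr 1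
  rw [← Set.range_comp]
  rfl

theorem ebar_psiE (v : AbLie F 8) : ebar F (psiE F v) = v := by
  rw [psiE_apply]
  simp only [map_add, map_smul, ebar_wmk]
  funext j
  simp only [AbLie_add_apply, AbLie_smul_apply]
  fin_cases j <;> simp [h8_apply, h8f, phiT, xv_apply] <;> ring

theorem psiE_ebar (z : ExtSq F (L58 F)) : psiE F (ebar F z) = z := by
  have hz : z ∈ Submodule.span F
      (Set.range fun p : L58 F × L58 F => wmk F (L58 F) p.1 p.2) := by
    rw [wmk_span]; trivial
  induction hz using Submodule.span_induction with
  | mem u hu =>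
    obtain ⟨⟨a, b⟩, rfl⟩ := hu
    rw [ebar_wmk, ← wmk_expand]
  | zero => simp
  | add u w hu' hw' hu hw => rw [map_add, map_add, hu, hw]
  | smul c u hu' hu => rw [map_smul, LinearMap.map_smul, hu]

/-- `L58 ∧ L58 ≅ A(8)`. -/
noncomputable def extEquiv : ExtSq F (L58 F) ≃ₗ⁅F⁆ AbLie F 8 :=
  LieEquiv.ofBijective (ebar F)
    ⟨fun z w h => by
      have hz := psiE_ebar F z
      rw [h, psiE_ebar F w] at hz
      exact hz.symm,
     fun v => ⟨psiE F v, ebar_psiE F v⟩⟩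

end EIso
/-- `L_{5,8} ∧ L_{5,8} ≅ A(8)` and `L_{5,8} ⊗ L_{5,8} ≅ A(14)`. -/
theorem L58_exterior_and_tensor (F : Type u) [Field F] :
    Nonempty (ExtSq F (L58 F) ≃ₗ⁅F⁆ AbLie F 8) ∧
    Nonempty (NTensor F (L58 F) ≃ₗ⁅F⁆ AbLie F 14) := by
  exact ⟨⟨extEquiv F⟩, ⟨tensorEquiv F⟩⟩
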